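/- No pure sequence-level KL bound exists (Proposition C.1, constructive form): for every ε > 0 there exist a horizon T ≥ 2, a finite vocabulary 𝒱, a finite prompt set 𝒳 with a probability distribution P, and strictly positive policies π_roll and π_θ such that D_KL^{seq} ≤ ε while D_KL^{tok,max} ≥ 1, where D_KL^{tok,max} = max over steps t and contexts c of D_KL(π_roll(·|c) ‖ π_θ(·|c)) and D_KL^{seq} = E_{x∼P}[ D_KL(P^{π_roll}(·|x) ‖ P^{π_θ}(·|x)) ]. In particular, there is no function f : ℝ → ℝ with f(x) → 0 as x → 0⁺ such that D_KL^{tok,max} ≤ f(D_KL^{seq}) holds for all such policy pairs. -/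
import Mathlib


open Finset

section Setup

variable {X V : Type*}

/-- A policy assigns to each context `(x, y_{<t})` (a prompt together with a token
prefix of length `t`) a strictly positive probability distribution on the next token. -/
structure Policy (X V : Type*) [Fintype V] where
  prob : ∀ t : ℕ, X × (Fin t → V) → V → ℝ
  pos : ∀ t c v, 0 < prob t c v
  sum_one : ∀ t c, ∑ v, prob t c v = 1

variable [Fintype X] [Fintype V]

/-- Trajectory probability `P^π(y | x) = ∏_t π(y_t | x, y_{<t})`. -/
noncomputable def traj (π : Policy X V) (T : ℕ) (x : X) (y : Fin T → V) : ℝ :=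
  ∏ t : Fin T, π.prob t.1 (x, fun s : Fin t.1 => y (Fin.castLE t.isLt.le s)) (y t)

/-- Context visitation mass at prefix length `k`: this is the paper's `d_{k+1}^π`,
a distribution on pairs (prompt, prefix of `k` tokens). -/
noncomputable def visit (π : Policy X V) (P : X → ℝ) (k : ℕ) (c : X × (Fin k → V)) : ℝ :=
  P c.1 * ∏ s : Fin k, π.prob s.1 (c.1, fun u : Fin s.1 => c.2 (Fin.castLE s.isLt.le u)) (c.2 s)

/-- Total variation distance `½ ∑ |p - q|`. -/
noncomputable def tvDist {α : Type*} [Fintype α] (p q : α → ℝ) : ℝ :=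
  (∑ a, |p a - q a|) / 2

/-- KL divergence `∑ p log (p/q)`. -/
noncomputable def klDiv {α : Type*} [Fintype α] (p q : α → ℝ) : ℝ :=
  ∑ a, p a * Real.log (p a / q a)

/-- The objective `J(π) = E_{x∼P} E_{y∼P^π(·|x)}[R(x,y)]`. -/
noncomputable def Jval (P : X → ℝ) (T : ℕ) (R : X → (Fin T → V) → ℝ) (π : Policy X V) : ℝ :=
  ∑ x, P x * ∑ y : Fin T → V, traj π T x y * R x y

/-- `Q^π(c, v)`: conditional expectation of the reward under continuation by `π`,
given context `c` (of length `k`) and next token `v`. -/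
noncomputable def Qval (T : ℕ) (R : X → (Fin T → V) → ℝ) (π : Policy X V)
    (k : ℕ) (hk : k < T) (c : X × (Fin k → V)) (v : V) : ℝ := by
  classical
  exact ∑ y : Fin T → V,
    if (∀ s : Fin k, y (Fin.castLE hk.le s) = c.2 s) ∧ y ⟨k, hk⟩ = v then
      (∏ s : Fin T, if k < s.1 then
          π.prob s.1 (c.1, fun u : Fin s.1 => y (Fin.castLE s.isLt.le u)) (y s)
        else 1) * R c.1 y
    else 0

/-- `V^π(c) = E_{v ∼ π(·|c)}[Q^π(c, v)]`. -/
noncomputable def Vval (T : ℕ) (R : X → (Fin T → V) → ℝ) (π : Policy X V)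
    (k : ℕ) (hk : k < T) (c : X × (Fin k → V)) : ℝ :=
  ∑ v, π.prob k c v * Qval T R π k hk c v

/-- Per-step advantage `A_t(c, v) = Q^{π_roll}(c,v) - V^{π_roll}(c)`. -/
noncomputable def Aval (T : ℕ) (R : X → (Fin T → V) → ℝ) (πroll : Policy X V)
    (k : ℕ) (hk : k < T) (c : X × (Fin k → V)) (v : V) : ℝ :=
  Qval T R πroll k hk c v - Vval T R πroll k hk c

/-- `g_t(c) = E_{v ∼ π_θ(·|c)}[A_t(c, v)]`. -/
noncomputable def gval (T : ℕ) (R : X → (Fin T → V) → ℝ) (πroll πθ : Policy X V)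
    (k : ℕ) (hk : k < T) (c : X × (Fin k → V)) : ℝ :=
  ∑ v, πθ.prob k c v * Aval T R πroll k hk c v

/-- Surrogate objective `L = ∑_{t=1}^T E_{c ∼ d_t^{π_roll}}[g_t(c)]`. -/
noncomputable def surrogate (P : X → ℝ) (T : ℕ) (R : X → (Fin T → V) → ℝ)
    (πroll πθ : Policy X V) : ℝ :=
  ∑ k : Fin T, ∑ c : X × (Fin k.1 → V), visit πroll P k.1 c * gval T R πroll πθ k.1 k.isLt c

/-- Approximation error `Error = J(π_θ) - J(π_roll) - L`. -/
noncomputable def errVal (P : X → ℝ) (T : ℕ) (R : X → (Fin T → V) → ℝ)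
    (πroll πθ : Policy X V) : ℝ :=
  Jval P T R πθ - Jval P T R πroll - surrogate P T R πroll πθ

/-- Sequence-level KL divergence `D_KL^seq = E_{x∼P}[D_KL(P^{π_roll}(·|x) ‖ P^{π_θ}(·|x))]`. -/
noncomputable def seqKL (P : X → ℝ) (T : ℕ) (πroll πθ : Policy X V) : ℝ :=
  ∑ x, P x * klDiv (fun y : Fin T → V => traj πroll T x y) (fun y => traj πθ T x y)

end Setup

/-- A full configuration of the paper's setting: a horizon, a finite prompt set with a
probability distribution, a finite vocabulary, and a pair of strictly positive policies. -/
structure Config where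
  T : ℕ
  hT : 1 ≤ T
  X : Type
  V : Type
  [iX : Fintype X]
  [iV : Fintype V]
  P : X → ℝ
  hP0 : ∀ x, 0 ≤ P x
  hP1 : ∑ x, P x = 1
  πroll : Policy X V
  πθ : Policy X V

attribute [instance] Config.iX Config.iV

/-- The sequence-level KL divergence `D_KL^seq` of a configuration. -/
noncomputable def Config.seqKLval (cfg : Config) : ℝ :=
  seqKL cfg.P cfg.T cfg.πroll cfg.πθ

/-- `D_KL^tok,max ≤ a`: every token-level KL divergence
`D_KL(π_roll(·|c) ‖ π_θ(·|c))` over steps `t ≤ T` and contexts `c` is at most `a`. -/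
def Config.TokKLLe (cfg : Config) (a : ℝ) : Prop :=
  ∀ k : ℕ, k < cfg.T → ∀ c : cfg.X × (Fin k → cfg.V),
    klDiv (cfg.πroll.prob k c) (cfg.πθ.prob k c) ≤ a

/-- `a ≤ D_KL^tok,max`: some token-level KL divergence
`D_KL(π_roll(·|c) ‖ π_θ(·|c))` is at least `a`. -/
def Config.TokKLGe (cfg : Config) (a : ℝ) : Prop :=
  ∃ k : ℕ, k < cfg.T ∧ ∃ c : cfg.X × (Fin k → cfg.V),
    a ≤ klDiv (cfg.πroll.prob k c) (cfg.πθ.prob k c)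


section Construction

/-- The fixed "target" distribution on `Bool`. -/
noncomputable def pq (v : Bool) : ℝ := if v then 1/100 else 99/100

lemma pq_pos (v : Bool) : 0 < pq v := by cases v <;> norm_num [pq]

/-- The rollout policy: uniform on `Bool` everywhere. -/
noncomputable def rollPolicy : Policy Bool Bool where
  prob _ _ _ := 1/2
  pos _ _ _ := by norm_num
  sum_one _ _ := by simp

/-- The trained policy: equals `pq` on prompt `true`, uniform on prompt `false`. -/
noncomputable def thetaPolicy : Policy Bool Bool where
  prob _ c v := if c.1 then pq v else 1/2
  pos _ c v := by
    by_cases h : c.1 <;> simp [h]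
    · exact pq_pos v
  sum_one _ c := by
    by_cases h : c.1 <;> simp [h, Fintype.sum_bool, pq] <;> norm_num

noncomputable def cfgOf (d : ℝ) (h0 : 0 < d) (h1 : d ≤ 1/2) : Config where
  T := 2
  hT := by norm_num
  X := Bool
  V := Bool
  P := fun x => if x then d else 1 - d
  hP0 := fun x => by cases x <;> simp <;> linarith
  hP1 := by simp [Fintype.sum_bool]
  πroll := rollPolicy
  πθ := thetaPolicy

lemma sum_fin2bool (f : (Fin 2 → Bool) → ℝ) :
    ∑ y, f y = f ![true, true] + f ![true, false] + f ![false, true] + f ![false, false] := by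
  rw [← Equiv.sum_comp (finTwoArrowEquiv Bool).symm f]
  simp [Fintype.sum_prod_type, Fintype.sum_bool, finTwoArrowEquiv]
  ring

lemma traj_roll (x : Bool) (y : Fin 2 → Bool) : traj rollPolicy 2 x y = 1/4 := by
  simp [traj, rollPolicy, Fin.prod_univ_two]
  norm_num

lemma traj_theta_false (y : Fin 2 → Bool) : traj thetaPolicy 2 false y = 1/4 := by
  simp [traj, thetaPolicy, Fin.prod_univ_two]
  norm_num

lemma traj_theta_true (y : Fin 2 → Bool) :
    traj thetaPolicy 2 true y = pq (y 0) * pq (y 1) := by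
  simp [traj, thetaPolicy, Fin.prod_univ_two]

/-- The value of the per-prompt sequence KL at prompt `true`. -/
noncomputable def Sval : ℝ :=
  klDiv (fun y : Fin 2 → Bool => traj rollPolicy 2 true y)
    (fun y => traj thetaPolicy 2 true y)

lemma Sval_eq : Sval = 1/4 * Real.log ((1/4) / (1/10000))
    + 1/4 * Real.log ((1/4) / (99/10000))
    + 1/4 * Real.log ((1/4) / (99/10000))
    + 1/4 * Real.log ((1/4) / (9801/10000)) := by
  unfold Sval klDiv
  rw [sum_fin2bool]
  simp only [traj_roll, traj_theta_true]
  norm_num [pq]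

lemma log_gt (x : ℝ) (hx : 0 < x) (hne : x ≠ 1) : 1 - 1/x < Real.log x := by
  have h := Real.log_lt_sub_one_of_pos (x := x⁻¹) (inv_pos.mpr hx)
    (by simpa [inv_eq_one] using hne)
  rw [Real.log_inv] at h
  rw [one_div]
  linarith

lemma Sval_pos : 0 < Sval := by
  rw [Sval_eq]
  have h1 := log_gt ((1/4) / (1/10000)) (by norm_num) (by norm_num)
  have h2 := log_gt ((1/4) / (99/10000)) (by norm_num) (by norm_num)
  have h3 := log_gt ((1/4) / (9801/10000)) (by norm_num) (by norm_num)
  norm_num at h1 h2 h3 ⊢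
  nlinarith

lemma Sval_le : Sval ≤ 2499 := by
  rw [Sval_eq]
  have h1 := Real.log_le_sub_one_of_pos (x := (1/4) / (1/10000)) (by norm_num)
  have h2 := Real.log_le_sub_one_of_pos (x := (1/4) / (99/10000)) (by norm_num)
  have h3 := Real.log_le_sub_one_of_pos (x := (1/4) / (9801/10000)) (by norm_num)
  norm_num at h1 h2 h3 ⊢
  nlinarith

lemma seqKL_eq (d : ℝ) (h0 : 0 < d) (h1 : d ≤ 1/2) :
    (cfgOf d h0 h1).seqKLval = d * Sval := by
  unfold Config.seqKLval cfgOf seqKL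
  rw [Fintype.sum_bool]
  have hf : klDiv (fun y : Fin 2 → Bool => traj rollPolicy 2 false y)
      (fun y => traj thetaPolicy 2 false y) = 0 := by
    unfold klDiv
    rw [sum_fin2bool]
    simp [traj_roll, traj_theta_false]
  simp only [if_true, if_false]
  rw [hf]
  unfold Sval
  ring

lemma tokKL_ge (d : ℝ) (h0 : 0 < d) (h1 : d ≤ 1/2) : (cfgOf d h0 h1).TokKLGe 1 := by
  refine ⟨0, by norm_num [cfgOf], ⟨(true, ![]), ?_⟩⟩
  show (1:ℝ) ≤ klDiv (rollPolicy.prob 0 (true, ![])) (thetaPolicy.prob 0 (true, ![]))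
  unfold klDiv
  rw [Fintype.sum_bool]
  simp only [rollPolicy, thetaPolicy, pq]
  norm_num
  have hlog : Real.log ((1/2) / (1/100)) + Real.log ((1/2) / (99/100))
      = Real.log (2500/99) := by
    rw [← Real.log_mul (by norm_num) (by norm_num)]
    norm_num
  have h2 : (2:ℝ) ≤ Real.log (2500/99) := by
    rw [Real.le_log_iff_exp_le (by norm_num)]
    have he : Real.exp 1 < 2.7182818286 := Real.exp_one_lt_d9
    have he0 : 0 < Real.exp 1 := Real.exp_pos 1
    have : Real.exp 2 = Real.exp 1 * Real.exp 1 := by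
      rw [← Real.exp_add]; norm_num
    nlinarith
  nlinarith [hlog]

lemma key_construction (ε : ℝ) (hε : 0 < ε) :
    ∃ cfg : Config, 2 ≤ cfg.T ∧ 0 < cfg.seqKLval ∧ cfg.seqKLval ≤ ε ∧ cfg.TokKLGe 1 := by
  set d : ℝ := min (ε / 2499) (1/2) with hd
  have h0 : 0 < d := lt_min (by positivity) (by norm_num)
  have h1 : d ≤ 1/2 := min_le_right _ _
  refine ⟨cfgOf d h0 h1, by norm_num [cfgOf], ?_, ?_, tokKL_ge d h0 h1⟩
  · rw [seqKL_eq]; exact mul_pos h0 Sval_pos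
  · rw [seqKL_eq]
    have hd2 : d ≤ ε / 2499 := min_le_left _ _
    nlinarith [Sval_pos, Sval_le]

end Construction

/-- **No pure sequence-level KL bound exists (Proposition C.1, constructive form)**:
for every `ε > 0` there is a configuration (horizon `T ≥ 2`, finite vocabulary, finite
prompt set with a distribution, strictly positive policies) with `D_KL^seq ≤ ε` while
`D_KL^tok,max ≥ 1`. In particular, there is no function `f : ℝ → ℝ` with `f(x) → 0` as
`x → 0⁺` such that `D_KL^tok,max ≤ f(D_KL^seq)` holds for all configurations. -/
theorem no_pure_seq_kl_bound :
    (∀ ε : ℝ, 0 < ε →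
      ∃ cfg : Config, 2 ≤ cfg.T ∧ cfg.seqKLval ≤ ε ∧ cfg.TokKLGe 1) ∧
    ¬ ∃ f : ℝ → ℝ,
        Filter.Tendsto f (nhdsWithin 0 (Set.Ioi 0)) (nhds 0) ∧
        ∀ cfg : Config, cfg.TokKLLe (f cfg.seqKLval) := by
  have key := key_construction
  constructor
  · intro ε hε
    obtain ⟨cfg, hT, _, hle, hge⟩ := key ε hε
    exact ⟨cfg, hT, hle, hge⟩
  · rintro ⟨f, hf, hbound⟩
    rw [Metric.tendsto_nhdsWithin_nhds] at hf
    obtain ⟨δ, hδ, hδ'⟩ := hf 1 one_pos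
    obtain ⟨cfg, hT, hpos, hle, hge⟩ := key (δ/2) (by positivity)
    have h1 : dist (f cfg.seqKLval) 0 < 1 := by
      apply hδ' hpos
      rw [Real.dist_eq, sub_zero, abs_of_pos hpos]
      linarith
    obtain ⟨k, hk, c, hc⟩ := hge
    have h2 : klDiv (cfg.πroll.prob k c) (cfg.πθ.prob k c) ≤ f cfg.seqKLval :=
      hbound cfg k hk c
    rw [Real.dist_eq, sub_zero] at h1
    have := le_abs_self (f cfg.seqKLval)
    linarith
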